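/- arXiv:math/0411184 — 2 statements merged into one kernel-verified Lean document; each statement's English description precedes it below -/
import Mathlib

section
/- Let μ ∈ ℂ and let x₀ ∈ ℂ with x₀² ≠ 4. Suppose (yₙ)ₙ∈ℤ is a bi-infinite sequence of complex numbers such that for every n, (x₀, yₙ, yₙ₊₁) is a μ-Markoff triple and yₙ₋₁ + yₙ₊₁ = x₀yₙ. Write x₀ = λ + λ⁻¹ with λ ≠ ±1. Then there exist A, B ∈ ℂ with AB = (x₀² − μ)/(x₀² − 4) such that yₙ = Aλⁿ + Bλ⁻ⁿ for all n ∈ ℤ. -/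
def MarkoffTriple (μ x y z : ℂ) : Prop := x^2 + y^2 + z^2 - x*y*z = μ

theorem markoff_neighbors_closed_form (μ x₀ l : ℂ) (y : ℤ → ℂ)
    (hl0 : l ≠ 0) (hl1 : l ≠ 1) (hl2 : l ≠ -1)
    (hx₀ : x₀ = l + l⁻¹) (hx4 : x₀^2 ≠ 4)
    (hM : ∀ n : ℤ, MarkoffTriple μ x₀ (y n) (y (n+1)))
    (hrec : ∀ n : ℤ, y (n-1) + y (n+1) = x₀ * y n) :
    ∃ A B : ℂ, A * B = (x₀^2 - μ)/(x₀^2 - 4) ∧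
      ∀ n : ℤ, y n = A * l^n + B * l^(-n) := by
  have hli : l * l⁻¹ = 1 := mul_inv_cancel₀ hl0
  have hd : l - l⁻¹ ≠ 0 := by
    intro h
    have h2 : l * l = 1 := by
      field_simp at h
      linear_combination h
    rcases mul_self_eq_one_iff.mp h2 with h3 | h3
    · exact hl1 h3
    · exact hl2 h3
  set A : ℂ := (y 1 - y 0 * l⁻¹) / (l - l⁻¹) with hA
  set B : ℂ := (y 0 * l - y 1) / (l - l⁻¹) with hB
  have hsum : A + B = y 0 := by
    rw [hA, hB, ← add_div,
      show y 1 - y 0 * l⁻¹ + (y 0 * l - y 1) = y 0 * (l - l⁻¹) by ring]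
    exact mul_div_cancel_right₀ _ hd
  have hsum1 : A * l + B * l⁻¹ = y 1 := by
    rw [hA, hB, div_mul_eq_mul_div, div_mul_eq_mul_div, ← add_div,
      show (y 1 - y 0 * l⁻¹) * l + (y 0 * l - y 1) * l⁻¹ = y 1 * (l - l⁻¹) by ring]
    exact mul_div_cancel_right₀ _ hd
  have hM0 : x₀^2 + (y 0)^2 + (y 1)^2 - x₀ * (y 0) * (y 1) = μ := hM 0
  have hsq : (l - l⁻¹) * (l - l⁻¹) = x₀^2 - 4 := by
    rw [hx₀]; linear_combination (-4 : ℂ) * hli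
  have hpq : (y 1 - y 0 * l⁻¹) * (y 0 * l - y 1) = x₀^2 - μ := by
    rw [hx₀] at hM0 ⊢
    linear_combination -hM0 - (y 0)^2 * hli
  have hAB : A * B = (x₀^2 - μ)/(x₀^2 - 4) := by
    rw [hA, hB, div_mul_div_comm, hpq, hsq]
  refine ⟨A, B, hAB, ?_⟩
  have step : ∀ m : ℤ, A * l^(m+1) + B * l^(-(m+1)) =
      x₀ * (A * l^m + B * l^(-m)) - (A * l^(m-1) + B * l^(-(m-1))) := by
    intro m
    have e1 : l^(m+1) = l^m * l := zpow_add_one₀ hl0 m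
    have e2 : l^(m-1) = l^m * l⁻¹ := zpow_sub_one₀ hl0 m
    have e3 : l^(-(m+1)) = l^(-m) * l⁻¹ := by
      rw [show -(m+1) = -m - 1 by ring, zpow_sub_one₀ hl0]
    have e4 : l^(-(m-1)) = l^(-m) * l := by
      rw [show -(m-1) = -m + 1 by ring, zpow_add_one₀ hl0]
    rw [hx₀, e1, e2, e3, e4]
    ring
  have key : ∀ n : ℤ, y n = A * l^n + B * l^(-n) ∧
      y (n+1) = A * l^(n+1) + B * l^(-(n+1)) := by
    intro n
    induction n using Int.induction_on with
    | zero =>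
      constructor
      · simpa using hsum.symm
      · simpa using hsum1.symm
    | succ k ih =>
      refine ⟨ih.2, ?_⟩
      have hr := hrec ((k:ℤ)+1)
      rw [add_sub_cancel_right] at hr
      have hs := step ((k:ℤ)+1)
      rw [add_sub_cancel_right] at hs
      rw [ih.1, ih.2] at hr
      linear_combination hr - hs
    | pred k ih =>
      have hr := hrec (-(k:ℤ))
      have hs := step (-(k:ℤ))
      rw [ih.1, ih.2] at hr
      constructor
      · linear_combination hr - hs
      · have h2 : -(k:ℤ) - 1 + 1 = -(k:ℤ) := by ring
        rw [h2]
        exact ih.1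
  exact fun n => (key n).1
end

section
/- With the hypotheses of the previous item, if additionally |xₙ| > 2 for all n ∈ ℤ and x∞ ∈ (−2,2) ⊂ ℝ, then |xₙ² − μ| > 4 − x∞² > 0 for all n; in particular xₙ² is bounded away from μ. -/
theorem markoff_bounded_away (μ : ℂ) (xinf : ℝ) (x : ℤ → ℂ)
    (hxinf : -2 < xinf ∧ xinf < 2)
    (hM : ∀ n : ℤ, MarkoffTriple μ (xinf : ℂ) (x n) (x (n+1)))
    (hrec : ∀ n : ℤ, x (n-1) + x (n+1) = (xinf : ℂ) * x n)
    (hbig : ∀ n : ℤ, 2 < ‖x n‖) :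
    (0 < 4 - xinf^2) ∧ ∀ n : ℤ, 4 - xinf^2 < ‖(x n)^2 - μ‖ := by
  obtain ⟨h1, h2⟩ := hxinf
  have hsq : xinf ^ 2 < 4 := by nlinarith
  refine ⟨by linarith, fun n => ?_⟩
  have hMn := hM n
  unfold MarkoffTriple at hMn
  have hr := hrec n
  have key : (x n)^2 - μ = x (n-1) * x (n+1) - ((xinf : ℂ))^2 := by
    have : x (n-1) = (xinf : ℂ) * x n - x (n+1) := by linear_combination hr
    rw [this, ← hMn]; ring
  rw [key]
  have h4 : 4 < ‖x (n-1) * x (n+1)‖ := by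
    rw [norm_mul]
    have := hbig (n-1); have := hbig (n+1)
    nlinarith [norm_nonneg (x (n-1)), norm_nonneg (x (n+1))]
  have habs : ‖((xinf : ℂ))^2‖ = xinf^2 := by
    rw [← Complex.ofReal_pow, Complex.norm_real, Real.norm_eq_abs, abs_of_nonneg (sq_nonneg _)]
  calc 4 - xinf^2 < ‖x (n-1) * x (n+1)‖ - ‖((xinf : ℂ))^2‖ := by
        rw [habs]; linarith
    _ ≤ ‖x (n-1) * x (n+1) - ((xinf : ℂ))^2‖ :=
        norm_sub_norm_le _ _
end
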